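/- Let f : S → ℝ be a bounded function on the family of closed counterclockwise arcs of S¹ with f of every degenerate arc equal to 0, and suppose that for any x₁, x₂, x₃, x₄ in counterclockwise order on S¹ we have f(arc(x₁,x₃)) + f(arc(x₂,x₄)) ≤ f(arc(x₁,x₄)) + f(arc(x₂,x₃)). For n ≥ 3, define mₙ = inf { Σ_{S∈X} f(S) : X is a tiling of S¹ by n arcs }. Then the sequence {mₙ} is convex, i.e., m_{n-1} + m_{n+1} ≥ 2mₙ for all n ≥ 4. -/

import Mathlib

open Finset


private lemma sumRangeAdd (h : ℕ → ℝ) (c d : ℕ) :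
    ∑ s ∈ range (c + d), h s = ∑ s ∈ range c, h s + ∑ s ∈ range d, h (c + s) := by
  induction d with
  | zero => simp
  | succ d ih =>
      rw [show c + (d + 1) = (c + d) + 1 by omega, Finset.sum_range_succ, ih,
        Finset.sum_range_succ, add_assoc]

private lemma perIter {P : ℤ → ℝ} {K : ℤ} {C : ℝ} (h : ∀ i, P (i + K) = P i + C) :
    ∀ (M : ℤ) (i : ℤ), P (i + K * M) = P i + C * M := by
  intro M
  induction M using Int.induction_on with
  | zero => simp
  | succ M ih =>
      intro i
      have h1 := h (i + K * M)
      have h2 := ih i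
      have e : i + K * (M + 1) = i + K * M + K := by ring
      rw [e, h1, h2]; push_cast; ring
  | pred M ih =>
      intro i
      have h1 := h (i + K * (-(M : ℤ) - 1))
      rw [show i + K * (-(M : ℤ) - 1) + K = i + K * (-(M : ℤ)) by ring, ih i] at h1
      push_cast at h1 ⊢
      linarith

private lemma shiftSum {g : ℤ → ℝ} {K : ℕ} (hg : ∀ i, g (i + (K : ℤ)) = g i) :
    ∀ c : ℤ, ∑ t ∈ range K, g (c + t) = ∑ t ∈ range K, g (t : ℤ) := by
  have step : ∀ c : ℤ, ∑ t ∈ range K, g ((c + 1) + t) = ∑ t ∈ range K, g (c + t) := by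
    intro c
    rcases Nat.eq_zero_or_pos K with hK | hK
    · simp [hK]
    obtain ⟨K', rfl⟩ : ∃ K', K = K' + 1 := ⟨K - 1, by omega⟩
    rw [Finset.sum_range_succ, Finset.sum_range_succ']
    have e1 : ∑ t ∈ range K', g (c + 1 + (t : ℤ)) =
        ∑ t ∈ range K', g (c + ((t + 1 : ℕ) : ℤ)) :=
      Finset.sum_congr rfl (fun t _ => by congr 1; push_cast; ring)
    have e2 : g (c + 1 + (K' : ℤ)) = g (c + ((0 : ℕ) : ℤ)) := by
      have h := hg c
      rw [show c + 1 + (K' : ℤ) = c + ((K' + 1 : ℕ) : ℤ) by push_cast; ring,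
        show c + ((0 : ℕ) : ℤ) = c by simp]
      exact_mod_cast h
    rw [e1, e2]
  intro c
  induction c using Int.induction_on with
  | zero => apply Finset.sum_congr rfl; intro t _; congr 1; ring
  | succ c ih => rw [← ih]; exact step c
  | pred c ih => rw [← ih, ← step (-(c : ℤ) - 1)]; congr 1; ring

private lemma toZChain {K : ℕ} (hK : 0 < K) (x : Fin (K + 1) → ℝ) (hmono : Monotone x)
    (hclose : x (Fin.last K) = x 0 + 2 * Real.pi) :
    ∃ P : ℤ → ℝ, Monotone P ∧ (∀ i, P (i + (K : ℤ)) = P i + 2 * Real.pi) ∧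
      (∀ t : Fin (K + 1), P ((t : ℕ) : ℤ) = x t) := by
  have hKZ : (0 : ℤ) < (K : ℤ) := by exact_mod_cast hK
  have hmem : ∀ i : ℤ, (i % (K : ℤ)).toNat < K + 1 := by
    intro i
    have h1 : 0 ≤ i % (K : ℤ) := Int.emod_nonneg i (by omega)
    have h2 : i % (K : ℤ) < K := Int.emod_lt_of_pos i hKZ
    omega
  have xeq : ∀ (a b : ℕ) (ha : a < K + 1) (hb : b < K + 1), a = b →
      x ⟨a, ha⟩ = x ⟨b, hb⟩ := by
    intro a b ha hb h; subst h; rfl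
  have xle : ∀ (a b : ℕ) (ha : a < K + 1) (hb : b < K + 1), a ≤ b →
      x ⟨a, ha⟩ ≤ x ⟨b, hb⟩ := by
    intro a b ha hb h; exact hmono h
  set P : ℤ → ℝ := fun i => x ⟨(i % (K : ℤ)).toNat, hmem i⟩ + 2 * Real.pi * ((i / (K : ℤ) : ℤ) : ℝ)
    with hP
  have Pval : ∀ i : ℤ, P i = x ⟨(i % (K : ℤ)).toNat, hmem i⟩ +
      2 * Real.pi * ((i / (K : ℤ) : ℤ) : ℝ) := fun i => rfl
  have key : ∀ i : ℤ, P i ≤ P (i + 1) := by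
    intro i
    have h1 : 0 ≤ i % (K : ℤ) := Int.emod_nonneg i (by omega)
    have h2 : i % (K : ℤ) < K := Int.emod_lt_of_pos i hKZ
    have hde : (K : ℤ) * (i / (K : ℤ)) + i % (K : ℤ) = i := Int.mul_ediv_add_emod i K
    rw [Pval i, Pval (i + 1)]
    by_cases hc : i % (K : ℤ) = (K : ℤ) - 1
    · have hmul : (K : ℤ) * (i / (K : ℤ) + 1) = (K : ℤ) * (i / (K : ℤ)) + K := by ring
      have hq : (i + 1) / (K : ℤ) = i / (K : ℤ) + 1 ∧ (i + 1) % (K : ℤ) = 0 := by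
        rw [Int.ediv_emod_unique hKZ]
        refine ⟨by omega, by omega, by omega⟩
      rw [hq.1]
      have hxx : x ⟨((i + 1) % (K : ℤ)).toNat, hmem (i + 1)⟩ = x (0 : Fin (K + 1)) := by
        have h0 : (0 : Fin (K + 1)) = ⟨0, by omega⟩ := by apply Fin.ext; rfl
        rw [h0]; apply xeq; omega
      rw [hxx]
      have hx : x ⟨(i % (K : ℤ)).toNat, hmem i⟩ ≤ x (Fin.last K) := by
        apply hmono; simp [Fin.le_def]; omega
      rw [hclose] at hx
      push_cast
      linarith
    · have hq : (i + 1) / (K : ℤ) = i / (K : ℤ) ∧ (i + 1) % (K : ℤ) = i % (K : ℤ) + 1 := by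
        rw [Int.ediv_emod_unique hKZ]
        refine ⟨by omega, by omega, by omega⟩
      rw [hq.1]
      have hxx : x ⟨((i + 1) % (K : ℤ)).toNat, hmem (i + 1)⟩ =
          x ⟨(i % (K : ℤ)).toNat + 1, by omega⟩ := by apply xeq; omega
      rw [hxx]
      have := xle ((i % (K : ℤ)).toNat) ((i % (K : ℤ)).toNat + 1) (by omega) (by omega) (by omega)
      linarith
  refine ⟨P, monotone_int_of_le_succ key, ?_, ?_⟩
  · intro i
    have h1 : 0 ≤ i % (K : ℤ) := Int.emod_nonneg i (by omega)
    have h2 : i % (K : ℤ) < K := Int.emod_lt_of_pos i hKZ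
    have hde : (K : ℤ) * (i / (K : ℤ)) + i % (K : ℤ) = i := Int.mul_ediv_add_emod i K
    have hmul : (K : ℤ) * (i / (K : ℤ) + 1) = (K : ℤ) * (i / (K : ℤ)) + K := by ring
    have hq : (i + (K : ℤ)) / (K : ℤ) = i / (K : ℤ) + 1 ∧
        (i + (K : ℤ)) % (K : ℤ) = i % (K : ℤ) := by
      rw [Int.ediv_emod_unique hKZ]
      refine ⟨by omega, by omega, by omega⟩
    rw [Pval, Pval, hq.1]
    have hxx : x ⟨((i + (K : ℤ)) % (K : ℤ)).toNat, hmem _⟩ =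
        x ⟨(i % (K : ℤ)).toNat, hmem i⟩ := by apply xeq; omega
    rw [hxx]
    push_cast
    ring
  · intro t
    have htK : (t : ℕ) < K + 1 := t.isLt
    rcases lt_or_eq_of_le (Nat.lt_succ_iff.mp htK) with ht | ht
    · have hq : ((t : ℕ) : ℤ) / (K : ℤ) = 0 ∧ ((t : ℕ) : ℤ) % (K : ℤ) = (t : ℕ) := by
        rw [Int.ediv_emod_unique hKZ]
        refine ⟨by omega, by omega, by omega⟩
      rw [Pval, hq.1]
      have hxx : x ⟨(((t : ℕ) : ℤ) % (K : ℤ)).toNat, hmem _⟩ = x t := by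
        conv_rhs => rw [show t = ⟨(t : ℕ), htK⟩ from Fin.ext rfl]
        exact xeq _ _ _ _ (by omega)
      rw [hxx]
      norm_num
    · have hq : ((t : ℕ) : ℤ) / (K : ℤ) = 1 ∧ ((t : ℕ) : ℤ) % (K : ℤ) = 0 := by
        rw [Int.ediv_emod_unique hKZ]
        refine ⟨by omega, by omega, by omega⟩
      rw [Pval, hq.1]
      have hlast : t = Fin.last K := by apply Fin.ext; simp [ht]
      have hxx : x ⟨(((t : ℕ) : ℤ) % (K : ℤ)).toNat, hmem _⟩ = x (0 : Fin (K + 1)) := by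
        have h0 : (0 : Fin (K + 1)) = ⟨0, by omega⟩ := by apply Fin.ext; rfl
        rw [h0]; apply xeq; omega
      rw [hxx, hlast, hclose]
      norm_num

private lemma sumRangeAdd' (h : ℕ → ℝ) (c d : ℕ) :
    ∑ s ∈ range (c + d), h s = ∑ s ∈ range c, h s + ∑ s ∈ range d, h (c + s) := by
  induction d with
  | zero => simp
  | succ d ih =>
      rw [show c + (d + 1) = (c + d) + 1 by omega, Finset.sum_range_succ, ih,
        Finset.sum_range_succ, add_assoc]

private lemma chainBuild (f : ℝ → ℝ → ℝ) {n : ℕ} (hn : 0 < n)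
    (X Y : ℤ → ℝ) (hX : Monotone X) (hY : Monotone Y)
    (a b : ℤ) (L m : ℕ) (hL : 1 ≤ L) (hLm : L + m = n)
    (hwrap : X (a + L - 1) ≤ X a + 2 * Real.pi)
    (hseam1 : 1 ≤ m → X (a + L - 1) ≤ Y b)
    (hseam2 : 1 ≤ m → Y (b + m - 1) ≤ X a + 2 * Real.pi) :
    ∃ x : Fin (n + 1) → ℝ, Monotone x ∧ x (Fin.last n) = x 0 + 2 * Real.pi ∧
      ∑ i : Fin n, f (x i.castSucc) (x i.succ) =
        (∑ s ∈ range (L - 1), f (X (a + s)) (X (a + s + 1))) +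
        (if m = 0 then f (X (a + L - 1)) (X a + 2 * Real.pi)
         else f (X (a + L - 1)) (Y b) + (∑ s ∈ range (m - 1), f (Y (b + s)) (Y (b + s + 1)))
              + f (Y (b + m - 1)) (X a + 2 * Real.pi)) := by
  have hLn : L ≤ n := by omega
  set w : ℕ → ℝ := fun t => if t < L then X (a + t) else
    (if t < n then Y (b + ((t - L : ℕ) : ℤ)) else X a + 2 * Real.pi) with hw
  have hw1 : ∀ t : ℕ, t < L → w t = X (a + t) := by
    intro t ht; simp only [hw, if_pos ht]
  have hw2 : ∀ t : ℕ, L ≤ t → t < n → w t = Y (b + ((t - L : ℕ) : ℤ)) := by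
    intro t ht1 ht2; simp only [hw, if_neg (by omega : ¬ t < L), if_pos ht2]
  have hw3 : w n = X a + 2 * Real.pi := by
    simp only [hw, if_neg (by omega : ¬ n < L), if_neg (lt_irrefl n)]
  have hstep : ∀ t : ℕ, t < n → w t ≤ w (t + 1) := by
    intro t ht
    by_cases h1 : t + 1 < L
    · rw [hw1 t (by omega), hw1 (t + 1) h1]
      apply hX; push_cast; omega
    · by_cases h2 : t < L
      · -- t = L - 1
        have htL : (t : ℤ) = (L : ℤ) - 1 := by omega
        rw [hw1 t h2, show a + (t : ℤ) = a + L - 1 by omega]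
        by_cases h3 : t + 1 < n
        · rw [hw2 (t + 1) (by omega) h3]
          have hm : 1 ≤ m := by omega
          have : ((t + 1 - L : ℕ) : ℤ) = 0 := by omega
          rw [this, add_zero]
          exact hseam1 hm
        · have : t + 1 = n := by omega
          rw [this, hw3]
          exact hwrap
      · -- L ≤ t
        have h2' : L ≤ t := by omega
        rw [hw2 t h2' ht]
        by_cases h3 : t + 1 < n
        · rw [hw2 (t + 1) (by omega) h3]
          apply hY; omega
        · have htn : t + 1 = n := by omega
          rw [htn, hw3]
          have hm : 1 ≤ m := by omega
          have : b + ((t - L : ℕ) : ℤ) = b + m - 1 := by omega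
          rw [this]
          exact hseam2 hm
  refine ⟨fun t => w t, ?_, ?_, ?_⟩
  · rw [Fin.monotone_iff_le_succ]
    intro i
    simp only [Fin.coe_castSucc, Fin.val_succ]
    exact hstep i i.isLt
  · simp only [Fin.val_last, Fin.val_zero, hw3, hw1 0 (by omega)]
    push_cast
    ring_nf
  · have hsum : ∑ i : Fin n, f (w i.castSucc) (w i.succ) =
        ∑ t ∈ range n, f (w t) (w (t + 1)) := by
      rw [← Fin.sum_univ_eq_sum_range (fun t => f (w t) (w (t + 1))) n]
      apply Finset.sum_congr rfl
      intro i _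
      simp only [Fin.coe_castSucc, Fin.val_succ]
    rw [hsum]
    rw [show n = L + m by omega, sumRangeAdd' _ L m]
    have eA : ∑ t ∈ range L, f (w t) (w (t + 1)) =
        (∑ s ∈ range (L - 1), f (X (a + s)) (X (a + s + 1))) + f (X (a + L - 1)) (w L) := by
      obtain ⟨L', rfl⟩ : ∃ L', L = L' + 1 := ⟨L - 1, by omega⟩
      rw [Finset.sum_range_succ, show L' + 1 - 1 = L' by omega]
      congr 1
      · apply Finset.sum_congr rfl
        intro t ht
        simp only [mem_range] at ht
        rw [hw1 t (by omega), hw1 (t + 1) (by omega)]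
        congr 2 <;> push_cast <;> ring
      · rw [hw1 L' (by omega)]
        congr 2
        omega
    rw [eA]
    by_cases hm : m = 0
    · rw [if_pos hm]
      subst hm
      have hLn' : L = n := by omega
      have hwL : w L = X a + 2 * Real.pi := by rw [hLn']; exact hw3
      rw [hwL]
      simp
    · rw [if_neg hm]
      have hwL : w L = Y b := by
        rw [hw2 L (le_refl L) (by omega)]
        congr 1
        omega
      rw [hwL]
      have eB : ∑ s ∈ range m, f (w (L + s)) (w (L + s + 1)) =
          (∑ s ∈ range (m - 1), f (Y (b + s)) (Y (b + s + 1))) +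
            f (Y (b + m - 1)) (X a + 2 * Real.pi) := by
        obtain ⟨m', rfl⟩ : ∃ m', m = m' + 1 := ⟨m - 1, by omega⟩
        rw [Finset.sum_range_succ, show m' + 1 - 1 = m' by omega]
        congr 1
        · apply Finset.sum_congr rfl
          intro s hs
          simp only [mem_range] at hs
          rw [hw2 (L + s) (by omega) (by omega), hw2 (L + s + 1) (by omega) (by omega)]
          congr 2 <;> omega
        · rw [hw2 (L + m') (by omega) (by omega), show L + m' + 1 = L + (m' + 1) by omega,
            show L + (m' + 1) = L + (m' + 1) + 0 by omega]
          rw [show L + (m' + 1) + 0 = n by omega, hw3]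
          congr 2
          omega
      rw [eB]
      ring

private lemma splitSum4 (G : ℕ → ℝ) (L n : ℕ) (h : L + 1 ≤ n) :
    ∑ t ∈ range (n + 1), G t =
      (∑ t ∈ range L, G t) + G L + (∑ s ∈ range (n - L - 1), G (L + 1 + s)) + G n := by
  have sumRangeAdd' : ∀ (h : ℕ → ℝ) (c d : ℕ),
      ∑ s ∈ range (c + d), h s = ∑ s ∈ range c, h s + ∑ s ∈ range d, h (c + s) := by
    intro h c d
    induction d with
    | zero => simp
    | succ d ih =>
        rw [show c + (d + 1) = (c + d) + 1 by omega, Finset.sum_range_succ, ih,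
          Finset.sum_range_succ, add_assoc]
  rw [show n + 1 = L + ((n - L - 1) + 1 + 1) by omega, sumRangeAdd',
    Finset.sum_range_succ, Finset.sum_range_succ']
  have e1 : ∀ s ∈ range (n - L - 1), G (L + (s + 1)) = G (L + 1 + s) := by
    intro s _; congr 1; omega
  rw [Finset.sum_congr rfl e1, show L + 0 = L by omega,
    show L + (n - L - 1 + 1) = n by omega]
  ring

private lemma mseqSetNE (f : ℝ → ℝ → ℝ) (j : ℕ) (hj : 0 < j) :
    Set.Nonempty {s | ∃ x : Fin (j + 1) → ℝ, Monotone x ∧ x (Fin.last j) = x 0 + 2 * Real.pi ∧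
      s = ∑ i : Fin j, f (x i.castSucc) (x i.succ)} := by
  have hπ := Real.pi_pos
  refine ⟨_, ⟨fun t => ((t : ℕ) : ℝ) * (2 * Real.pi / j), ?_, ?_, rfl⟩⟩
  · intro s t hst
    apply mul_le_mul_of_nonneg_right
    · exact_mod_cast Fin.le_def.mp hst
    · positivity
  · simp only [Fin.val_last, Fin.val_zero, Nat.cast_zero, zero_mul, zero_add]
    field_simp


private lemma mseqSetBdd (f : ℝ → ℝ → ℝ) (B : ℝ)
    (hB : ∀ a b : ℝ, a ≤ b → b ≤ a + 2 * Real.pi → |f a b| ≤ B) (j : ℕ) :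
    BddBelow {s | ∃ x : Fin (j + 1) → ℝ, Monotone x ∧ x (Fin.last j) = x 0 + 2 * Real.pi ∧
      s = ∑ i : Fin j, f (x i.castSucc) (x i.succ)} := by
  refine ⟨-(j * B), ?_⟩
  rintro s ⟨x, hmono, hclose, rfl⟩
  have hterm : ∀ i : Fin j, -B ≤ f (x i.castSucc) (x i.succ) := by
    intro i
    have h1 : x i.castSucc ≤ x i.succ := hmono (Fin.castSucc_lt_succ : i.castSucc < i.succ).le
    have h2 : x i.succ ≤ x i.castSucc + 2 * Real.pi := by
      have ha : x i.succ ≤ x (Fin.last j) := hmono (Fin.le_last _)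
      have hb : x 0 ≤ x i.castSucc := hmono (Fin.zero_le _)
      rw [hclose] at ha; linarith
    have h3 := abs_le.mp (hB _ _ h1 h2)
    linarith [h3.1]
  have hsum : ∑ _i : Fin j, (-B : ℝ) ≤ ∑ i : Fin j, f (x i.castSucc) (x i.succ) :=
    Finset.sum_le_sum (fun i _ => hterm i)
  have : ∑ _i : Fin j, (-B : ℝ) = -(j * B) := by
    rw [Finset.sum_const, Finset.card_univ, Fintype.card_fin, nsmul_eq_mul]
    ring
  linarith
noncomputable def mseq (f : ℝ → ℝ → ℝ) (n : ℕ) : ℝ :=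
  sInf {s | ∃ x : Fin (n + 1) → ℝ, Monotone x ∧ x (Fin.last n) = x 0 + 2 * Real.pi ∧
    s = ∑ i : Fin n, f (x i.castSucc) (x i.succ)}

theorem stmt1 (f : ℝ → ℝ → ℝ)
    (hbdd : ∃ B : ℝ, ∀ a b : ℝ, a ≤ b → b ≤ a + 2 * Real.pi → |f a b| ≤ B)
    (hdeg : ∀ a : ℝ, f a a = 0)
    (hper : ∀ a b : ℝ, f (a + 2 * Real.pi) (b + 2 * Real.pi) = f a b)
    (hineq : ∀ a b c d : ℝ, a ≤ b → b ≤ c → c ≤ d → d ≤ a + 2 * Real.pi →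
      f a c + f b d ≤ f a d + f b c)
    (n : ℕ) (hn : 4 ≤ n) :
    2 * mseq f n ≤ mseq f (n - 1) + mseq f (n + 1) := by
  obtain ⟨B, hB⟩ := hbdd
  have hπ := Real.pi_pos
  apply le_of_forall_pos_le_add
  intro ε hε
  obtain ⟨sP, hsPmem, hsPlt⟩ :=
    Real.lt_sInf_add_pos (mseqSetNE f (n + 1) (by omega)) (by positivity : (0:ℝ) < ε / 2)
  obtain ⟨sQ, hsQmem, hsQlt⟩ :=
    Real.lt_sInf_add_pos (mseqSetNE f (n - 1) (by omega)) (by positivity : (0:ℝ) < ε / 2)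
  obtain ⟨xP, hxPmono, hxPclose, hsPdef⟩ := hsPmem
  obtain ⟨xQ, hxQmono, hxQclose, hsQdef⟩ := hsQmem
  obtain ⟨P, hPm, hPper, hPval⟩ := toZChain (by omega : 0 < n + 1) xP hxPmono hxPclose
  obtain ⟨Q, hQm, hQper, hQval⟩ := toZChain (by omega : 0 < n - 1) xQ hxQmono hxQclose
  have hPper' : ∀ i : ℤ, P (i + ((n : ℤ) + 1)) = P i + 2 * Real.pi := by
    intro i
    have := hPper i
    rwa [show ((n + 1 : ℕ) : ℤ) = (n : ℤ) + 1 by push_cast; ring] at this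
  have hQper' : ∀ i : ℤ, Q (i + ((n : ℤ) - 1)) = Q i + 2 * Real.pi := by
    intro i
    have := hQper i
    rwa [show ((n - 1 : ℕ) : ℤ) = (n : ℤ) - 1 by omega] at this
  -- window sums equal sP, sQ
  have gPper : ∀ i : ℤ, (fun z => f (P z) (P (z + 1))) (i + ((n + 1 : ℕ) : ℤ)) =
      (fun z => f (P z) (P (z + 1))) i := by
    intro i
    simp only
    rw [hPper i, show i + ((n + 1 : ℕ) : ℤ) + 1 = (i + 1) + ((n + 1 : ℕ) : ℤ) by ring,
      hPper (i + 1)]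
    exact hper _ _
  have gQper : ∀ i : ℤ, (fun z => f (Q z) (Q (z + 1))) (i + ((n - 1 : ℕ) : ℤ)) =
      (fun z => f (Q z) (Q (z + 1))) i := by
    intro i
    simp only
    rw [hQper i, show i + ((n - 1 : ℕ) : ℤ) + 1 = (i + 1) + ((n - 1 : ℕ) : ℤ) by ring,
      hQper (i + 1)]
    exact hper _ _
  have hshP : ∀ c : ℤ, ∑ t ∈ range (n + 1), f (P (c + (t : ℤ))) (P (c + (t : ℤ) + 1)) = sP := by
    intro c
    have h0 : ∑ t ∈ range (n + 1), f (P ((t : ℕ) : ℤ)) (P (((t : ℕ) : ℤ) + 1)) = sP := by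
      rw [hsPdef, ← Fin.sum_univ_eq_sum_range (fun t : ℕ => f (P (t : ℤ)) (P ((t : ℤ) + 1))) (n + 1)]
      apply Finset.sum_congr rfl
      intro i _
      have e1 : P ((i : ℕ) : ℤ) = xP i.castSucc := by
        have h := hPval i.castSucc
        rwa [Fin.coe_castSucc] at h
      have e2 : P (((i : ℕ) : ℤ) + 1) = xP i.succ := by
        have h := hPval i.succ
        rw [Fin.val_succ] at h
        rw [← h]
        congr 1 <;> omega
      rw [e1, e2]
    have h1 := shiftSum (g := fun z => f (P z) (P (z + 1))) gPper c
    rw [h1, h0]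
  have hshQ : ∀ c : ℤ, ∑ t ∈ range (n - 1), f (Q (c + (t : ℤ))) (Q (c + (t : ℤ) + 1)) = sQ := by
    intro c
    have h0 : ∑ t ∈ range (n - 1), f (Q ((t : ℕ) : ℤ)) (Q (((t : ℕ) : ℤ) + 1)) = sQ := by
      rw [hsQdef, ← Fin.sum_univ_eq_sum_range (fun t : ℕ => f (Q (t : ℤ)) (Q ((t : ℤ) + 1))) (n - 1)]
      apply Finset.sum_congr rfl
      intro i _
      have e1 : Q ((i : ℕ) : ℤ) = xQ i.castSucc := by
        have h := hQval i.castSucc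
        rwa [Fin.coe_castSucc] at h
      have e2 : Q (((i : ℕ) : ℤ) + 1) = xQ i.succ := by
        have h := hQval i.succ
        rw [Fin.val_succ] at h
        rw [← h]
        congr 1 <;> omega
      rw [e1, e2]
    have h1 := shiftSum (g := fun z => f (Q z) (Q (z + 1))) gQper c
    rw [h1, h0]
  -- iterated periodicity of Q
  have hQiter : ∀ (M : ℤ) (i : ℤ), Q (i + ((n : ℤ) - 1) * M) = Q i + 2 * Real.pi * M :=
    perIter hQper'
  -- the greatest-index function jf
  have hjex : ∀ i : ℤ, ∃ jj : ℤ, Q jj ≤ P i ∧ ∀ z : ℤ, Q z ≤ P i → z ≤ jj := by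
    intro i
    have h2π : (0:ℝ) < 2 * Real.pi := by linarith
    obtain ⟨M, hM⟩ := exists_nat_gt ((P i - Q 0) / (2 * Real.pi))
    obtain ⟨M', hM'⟩ := exists_nat_gt ((Q 0 - P i) / (2 * Real.pi))
    have hMr : P i - Q 0 < (M : ℝ) * (2 * Real.pi) := (div_lt_iff₀ h2π).mp hM
    have hM'r : Q 0 - P i < (M' : ℝ) * (2 * Real.pi) := (div_lt_iff₀ h2π).mp hM'
    obtain ⟨jj, hjj1, hjj2⟩ := Int.exists_greatest_of_bdd
      (P := fun z => Q z ≤ P i)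
      ⟨((n : ℤ) - 1) * M, by
        intro z hz
        by_contra hcon
        push_neg at hcon
        have h1 : Q (((n : ℤ) - 1) * M) ≤ Q z := hQm (by omega)
        have h2 := hQiter ((M : ℕ) : ℤ) 0
        rw [zero_add] at h2
        push_cast at h2
        rw [h2] at h1
        have h3 : Q z ≤ P i := hz
        linarith⟩
      ⟨((n : ℤ) - 1) * (-(M' : ℤ)), by
        show Q (((n : ℤ) - 1) * (-(M' : ℤ))) ≤ P i
        have h2 := hQiter (-(M' : ℤ)) 0
        rw [zero_add] at h2
        push_cast at h2
        rw [h2]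
        linarith⟩
    exact ⟨jj, hjj1, hjj2⟩
  choose jf hjle hjmax using hjex
  have F2 : ∀ i : ℤ, P i < Q (jf i + 1) := by
    intro i
    by_contra h
    push_neg at h
    have := hjmax i (jf i + 1) h
    omega
  have F3 : ∀ i i' : ℤ, i ≤ i' → jf i ≤ jf i' := by
    intro i i' h
    exact hjmax i' (jf i) ((hjle i).trans (hPm h))
  have F4 : ∀ i : ℤ, jf (i + ((n : ℤ) + 1)) = jf i + ((n : ℤ) - 1) := by
    intro i
    have hle : jf (i + ((n : ℤ) + 1)) ≤ jf i + ((n : ℤ) - 1) := by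
      by_contra hcon
      push_neg at hcon
      have h1 : Q (jf i + 1 + ((n : ℤ) - 1)) ≤ Q (jf (i + ((n : ℤ) + 1))) := hQm (by omega)
      rw [hQper' (jf i + 1)] at h1
      have h2 := hjle (i + ((n : ℤ) + 1))
      rw [hPper' i] at h2
      have h3 := F2 i
      linarith
    have hge : jf i + ((n : ℤ) - 1) ≤ jf (i + ((n : ℤ) + 1)) := by
      apply hjmax
      rw [hQper' (jf i), hPper' i]
      linarith [hjle i]
    omega
  -- find i1 with jf (i1+1) = jf i1
  have hi1ex : ∃ i1 : ℤ, 0 ≤ i1 ∧ i1 ≤ (n : ℤ) ∧ jf (i1 + 1) = jf i1 := by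
    by_contra hcon
    push_neg at hcon
    have hstep : ∀ i : ℤ, 0 ≤ i → i ≤ (n : ℤ) → jf i + 1 ≤ jf (i + 1) := by
      intro i h0 h1
      have hmono := F3 i (i + 1) (by omega)
      have hne := hcon i h0 h1
      omega
    have hind : ∀ t : ℕ, (t : ℤ) ≤ (n : ℤ) + 1 → jf 0 + t ≤ jf (t : ℤ) := by
      intro t
      induction t with
      | zero => intro _; simp
      | succ t ih =>
          intro ht
          have h1 := ih (by push_cast at ht ⊢; omega)
          have h2 := hstep (t : ℤ) (by positivity) (by push_cast at ht; omega)
          push_cast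
          push_cast at h1 ht
          omega
    have hfin := hind (n + 1) (by push_cast; omega)
    have hF := F4 0
    rw [zero_add] at hF
    push_cast at hfin
    have : ((n : ℤ) + 1) = ((n : ℤ) + 1) := rfl
    rw [show ((n : ℤ) + 1) = ((n : ℤ) + 1) from rfl] at hfin
    have : jf ((n : ℤ) + 1) = jf 0 + ((n : ℤ) - 1) := hF
    omega
  obtain ⟨i1, hi1a, hi1b, hstep1⟩ := hi1ex
  obtain ⟨i2, ⟨hi2a, hi2b, hi2d⟩, hi2max⟩ := Int.exists_greatest_of_bdd
    (P := fun z => i1 + 1 ≤ z ∧ z ≤ i1 + (n : ℤ) + 1 ∧ z - jf z ≤ i1 + 1 - jf i1)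
    ⟨i1 + (n : ℤ) + 1, fun z hz => hz.2.1⟩
    ⟨i1 + 1, ⟨le_refl _, by omega, by omega⟩⟩
  have hdend : jf (i1 + (n : ℤ) + 1) = jf i1 + (n : ℤ) - 1 := by
    have h := F4 i1
    rw [show i1 + ((n : ℤ) + 1) = i1 + (n : ℤ) + 1 by ring] at h
    omega
  have hi2b' : i2 ≤ i1 + (n : ℤ) := by
    rcases eq_or_lt_of_le hi2b with h | h
    · exfalso; rw [h] at hi2d; omega
    · omega
  have hd2 : i2 - jf i2 = i1 + 1 - jf i1 ∧ jf (i2 + 1) = jf i2 := by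
    have hmono := F3 i2 (i2 + 1) (by omega)
    by_cases hc : i2 + 1 ≤ i1 + (n : ℤ) + 1
    · have hnp : ¬(i1 + 1 ≤ i2 + 1 ∧ i2 + 1 ≤ i1 + (n : ℤ) + 1 ∧
          i2 + 1 - jf (i2 + 1) ≤ i1 + 1 - jf i1) := by
        intro hP
        have := hi2max (i2 + 1) hP
        omega
      push_neg at hnp
      have h3 := hnp (by omega) hc
      omega
    · have heq : jf (i2 + 1) = jf i1 + (n : ℤ) - 1 := by
        rw [show i2 + 1 = i1 + (n : ℤ) + 1 by omega]
        exact hdend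
      omega
  obtain ⟨hd2v, hstep2⟩ := hd2
  set j1 := jf i1 with hj1def
  set j2 := jf i2 with hj2def
  have hj2 : j2 = j1 + (i2 - i1 - 1) := by omega
  obtain ⟨L, hLZ⟩ : ∃ L : ℕ, (L : ℤ) = i2 - i1 - 1 := ⟨(i2 - i1 - 1).toNat, by omega⟩
  have hLn1 : (L : ℤ) ≤ (n : ℤ) - 1 := by omega
  have hLnat : L + 1 ≤ n := by omega
  have s1a : Q j1 ≤ P i1 := hjle i1
  have s1b : P (i1 + 1) < Q (j1 + 1) := by
    have h := F2 (i1 + 1)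
    rwa [hstep1] at h
  have s2a : Q j2 ≤ P i2 := hjle i2
  have s2b : P (i2 + 1) < Q (j2 + 1) := by
    have h := F2 (i2 + 1)
    rwa [hstep2] at h
  have dQ1 : Q (j1 + 1) ≤ Q j1 + 2 * Real.pi := by
    have h1 : Q (j1 + 1) ≤ Q (j1 + ((n : ℤ) - 1)) := hQm (by omega)
    rwa [hQper' j1] at h1
  have dQ2 : Q (j2 + 1) ≤ Q j2 + 2 * Real.pi := by
    have h1 : Q (j2 + 1) ≤ Q (j2 + ((n : ℤ) - 1)) := hQm (by omega)
    rwa [hQper' j2] at h1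
  -- build the two n-arc chains
  obtain ⟨xA, hAmono, hAclose, hAsum⟩ := chainBuild f (show 0 < n by omega) P
    (fun z => Q z + 2 * Real.pi) hPm (hQm.add_const _) (i2 + 1) (j1 + 1) (n - L) L
    (by omega) (by omega)
    (by rw [show i2 + 1 + ((n - L : ℕ) : ℤ) - 1 = i1 + ((n : ℤ) + 1) by omega, hPper' i1]
        have h : P i1 ≤ P (i2 + 1) := hPm (by omega)
        linarith)
    (by intro _
        show P (i2 + 1 + ((n - L : ℕ) : ℤ) - 1) ≤ Q (j1 + 1) + 2 * Real.pi
        rw [show i2 + 1 + ((n - L : ℕ) : ℤ) - 1 = i1 + ((n : ℤ) + 1) by omega, hPper' i1]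
        have h1 : P i1 ≤ P (i1 + 1) := hPm (by omega)
        linarith [s1b])
    (by intro hm
        show Q (j1 + 1 + (L : ℤ) - 1) + 2 * Real.pi ≤ P (i2 + 1) + 2 * Real.pi
        rw [show j1 + 1 + (L : ℤ) - 1 = j2 by omega]
        have h1 : P i2 ≤ P (i2 + 1) := hPm (by omega)
        linarith [s2a])
  obtain ⟨xB, hBmono, hBclose, hBsum⟩ := chainBuild f (show 0 < n by omega) P Q hPm hQm
    (i1 + 1) (j2 + 1) (L + 1) (n - 1 - L) (by omega) (by omega)
    (by rw [show i1 + 1 + ((L + 1 : ℕ) : ℤ) - 1 = i2 by omega]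
        have h1 : P i2 ≤ P (i1 + 1 + ((n : ℤ) + 1)) := hPm (by omega)
        rwa [hPper' (i1 + 1)] at h1)
    (by intro _
        rw [show i1 + 1 + ((L + 1 : ℕ) : ℤ) - 1 = i2 by omega]
        have h1 : P i2 ≤ P (i2 + 1) := hPm (by omega)
        linarith [s2b])
    (by intro hm
        rw [show j2 + 1 + ((n - 1 - L : ℕ) : ℤ) - 1 = j1 + ((n : ℤ) - 1) by omega, hQper' j1]
        have h1 : P i1 ≤ P (i1 + 1) := hPm (by omega)
        linarith [s1a])
  try simp only at hAsum
  try simp only at hBsum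
  have hmA : mseq f n ≤ ∑ i : Fin n, f (xA i.castSucc) (xA i.succ) :=
    csInf_le (mseqSetBdd f B hB n) ⟨xA, hAmono, hAclose, rfl⟩
  have hmB : mseq f n ≤ ∑ i : Fin n, f (xB i.castSucc) (xB i.succ) :=
    csInf_le (mseqSetBdd f B hB n) ⟨xB, hBmono, hBclose, rfl⟩
  have hsPlt' : sP < mseq f (n + 1) + ε / 2 := hsPlt
  have hsQlt' : sQ < mseq f (n - 1) + ε / 2 := hsQlt
  -- decompose sP
  have EP : sP = (∑ s ∈ range L, f (P (i1 + 1 + (s : ℤ))) (P (i1 + 1 + (s : ℤ) + 1)))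
      + f (P i2) (P (i2 + 1))
      + (∑ s ∈ range (n - L - 1), f (P (i2 + 1 + (s : ℤ))) (P (i2 + 1 + (s : ℤ) + 1)))
      + f (P i1) (P (i1 + 1)) := by
    rw [← hshP (i1 + 1),
      splitSum4 (fun t => f (P (i1 + 1 + (t : ℤ))) (P (i1 + 1 + (t : ℤ) + 1))) L n hLnat]
    have eGL : f (P (i1 + 1 + (L : ℤ))) (P (i1 + 1 + (L : ℤ) + 1)) = f (P i2) (P (i2 + 1)) := by
      rw [show i1 + 1 + (L : ℤ) = i2 by omega]
    have eGn : f (P (i1 + 1 + (n : ℤ))) (P (i1 + 1 + (n : ℤ) + 1)) =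
        f (P i1) (P (i1 + 1)) := by
      rw [show i1 + 1 + (n : ℤ) = i1 + ((n : ℤ) + 1) by ring,
        show i1 + ((n : ℤ) + 1) + 1 = (i1 + 1) + ((n : ℤ) + 1) by ring, hPper' i1,
        hPper' (i1 + 1)]
      exact hper _ _
    have eMid : ∑ s ∈ range (n - L - 1),
        f (P (i1 + 1 + ((L + 1 + s : ℕ) : ℤ))) (P (i1 + 1 + ((L + 1 + s : ℕ) : ℤ) + 1)) =
        ∑ s ∈ range (n - L - 1), f (P (i2 + 1 + (s : ℤ))) (P (i2 + 1 + (s : ℤ) + 1)) := by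
      apply Finset.sum_congr rfl
      intro s _
      rw [show i1 + 1 + ((L + 1 + s : ℕ) : ℤ) = i2 + 1 + (s : ℤ) by omega]
    rw [eGL, eGn, eMid]
  rw [Nat.add_sub_cancel] at hBsum
  by_cases hL0 : L = 0
  · -- degenerate case: A-chain has no Q-part
    rw [if_pos hL0] at hAsum
    rw [if_neg (by omega : ¬ (n - 1 - L = 0))] at hBsum
    have cA1 : f (P (i2 + 1 + ((n - L : ℕ) : ℤ) - 1)) (P (i2 + 1) + 2 * Real.pi) =
        f (P i1) (P (i2 + 1)) := by
      rw [show i2 + 1 + ((n - L : ℕ) : ℤ) - 1 = i1 + ((n : ℤ) + 1) by omega, hPper' i1]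
      exact hper _ _
    rw [cA1] at hAsum
    have cB1 : f (P (i1 + 1 + ((L + 1 : ℕ) : ℤ) - 1)) (Q (j2 + 1)) =
        f (P i2) (Q (j2 + 1)) := by
      rw [show i1 + 1 + ((L + 1 : ℕ) : ℤ) - 1 = i2 by omega]
    have cB3 : f (Q (j2 + 1 + ((n - 1 - L : ℕ) : ℤ) - 1)) (P (i1 + 1) + 2 * Real.pi) =
        f (Q j1) (P (i1 + 1)) := by
      rw [show j2 + 1 + ((n - 1 - L : ℕ) : ℤ) - 1 = j1 + ((n : ℤ) - 1) by omega, hQper' j1]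
      exact hper _ _
    rw [cB1, cB3] at hBsum
    rw [show n - 1 - L - 1 = n - 2 by omega] at hBsum
    have EQ0 : sQ = (∑ s ∈ range (n - 2),
        f (Q (j2 + 1 + (s : ℤ))) (Q (j2 + 1 + (s : ℤ) + 1))) + f (Q j1) (Q (j1 + 1)) := by
      rw [← hshQ (j1 + 1), show n - 1 = (n - 2) + 1 by omega, Finset.sum_range_succ]
      congr 1
      · apply Finset.sum_congr rfl
        intro s _
        rw [show j1 + 1 + (s : ℤ) = j2 + 1 + (s : ℤ) by omega]
      · rw [show j1 + 1 + ((n - 2 : ℕ) : ℤ) = j1 + ((n : ℤ) - 1) by omega,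
          show j1 + ((n : ℤ) - 1) + 1 = (j1 + 1) + ((n : ℤ) - 1) by ring, hQper' j1,
          hQper' (j1 + 1)]
        exact hper _ _
    have e4 : P (i1 + 1) = P i2 := by rw [show i1 + 1 = i2 by omega]
    have b1 : f (Q j1) (P (i1 + 1)) = f (Q j1) (P i2) := by rw [e4]
    have b2 : f (P i2) (Q (j2 + 1)) = f (P i2) (Q (j1 + 1)) := by
      rw [show j2 = j1 by omega]
    have b3 : f (P i1) (P (i1 + 1)) = f (P i1) (P i2) := by rw [e4]
    have I1 := hineq (Q j1) (P i1) (P i2) (Q (j1 + 1)) s1a (hPm (by omega))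
      (by rw [← e4]; exact s1b.le) dQ1
    have I2 := hineq (P i1) (P i2) (P (i2 + 1)) (Q (j1 + 1)) (hPm (by omega))
      (hPm (by omega))
      (by have h := s2b.le; rwa [show j2 + 1 = j1 + 1 by omega] at h)
      (by linarith [dQ1, s1a])
    linarith [hmA, hmB, hAsum, hBsum, EP, EQ0, I1, I2, b1, b2, b3, hsPlt', hsQlt']
  · by_cases hLt : L = n - 1
    · -- degenerate case: B-chain has no Q-part
      rw [if_neg hL0] at hAsum
      rw [if_pos (by omega : n - 1 - L = 0)] at hBsum
      have cA1 : f (P (i2 + 1 + ((n - L : ℕ) : ℤ) - 1)) (Q (j1 + 1) + 2 * Real.pi) =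
          f (P i1) (Q (j1 + 1)) := by
        rw [show i2 + 1 + ((n - L : ℕ) : ℤ) - 1 = i1 + ((n : ℤ) + 1) by omega, hPper' i1]
        exact hper _ _
      have cA2 : ∑ s ∈ range (L - 1),
          f (Q (j1 + 1 + (s : ℤ)) + 2 * Real.pi) (Q (j1 + 1 + (s : ℤ) + 1) + 2 * Real.pi) =
          ∑ s ∈ range (L - 1), f (Q (j1 + 1 + (s : ℤ))) (Q (j1 + 1 + (s : ℤ) + 1)) :=
        Finset.sum_congr rfl (fun s _ => hper _ _)
      have cA3 : f (Q (j1 + 1 + (L : ℤ) - 1) + 2 * Real.pi) (P (i2 + 1) + 2 * Real.pi) =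
          f (Q j2) (P (i2 + 1)) := by
        rw [show j1 + 1 + (L : ℤ) - 1 = j2 by omega]
        exact hper _ _
      rw [cA1, cA2, cA3] at hAsum
      have cBt : f (P (i1 + 1 + ((L + 1 : ℕ) : ℤ) - 1)) (P (i1 + 1) + 2 * Real.pi) =
          f (P i2) (P (i1 + 1) + 2 * Real.pi) := by
        rw [show i1 + 1 + ((L + 1 : ℕ) : ℤ) - 1 = i2 by omega]
      rw [cBt] at hBsum
      have EQt : sQ = (∑ s ∈ range (L - 1),
          f (Q (j1 + 1 + (s : ℤ))) (Q (j1 + 1 + (s : ℤ) + 1))) + f (Q j2) (Q (j2 + 1)) := by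
        rw [← hshQ (j1 + 1), show n - 1 = (L - 1) + 1 by omega, Finset.sum_range_succ]
        congr 1
        rw [show j1 + 1 + ((L - 1 : ℕ) : ℤ) = j2 by omega]
      have e1t : P (i2 + 1) = P i1 + 2 * Real.pi := by
        rw [show i2 + 1 = i1 + ((n : ℤ) + 1) by omega]
        exact hPper' i1
      have e3t : Q (j2 + 1) = Q (j1 + 1) + 2 * Real.pi := by
        rw [show j2 + 1 = (j1 + 1) + ((n : ℤ) - 1) by omega]
        exact hQper' (j1 + 1)
      have I1 := hineq (Q j2) (P i2) (P (i2 + 1)) (Q (j2 + 1)) s2a (hPm (by omega))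
        s2b.le dQ2
      have I2 := hineq (P i2) (P (i2 + 1)) (P (i1 + 1) + 2 * Real.pi) (Q (j2 + 1))
        (hPm (by omega))
        (by rw [e1t]; have := hPm (show i1 ≤ i1 + 1 by omega); linarith)
        (by rw [e3t]; linarith [s1b])
        (by rw [e3t]
            have h1 : Q (j1 + 1) ≤ Q j2 := hQm (by omega)
            linarith [s2a])
      have br1 : f (P (i2 + 1)) (Q (j2 + 1)) = f (P i1) (Q (j1 + 1)) := by
        rw [e1t, e3t]; exact hper _ _
      have br2 : f (P (i2 + 1)) (P (i1 + 1) + 2 * Real.pi) = f (P i1) (P (i1 + 1)) := by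
        rw [e1t]; exact hper _ _
      linarith [hmA, hmB, hAsum, hBsum, EP, EQt, I1, I2, br1, br2, hsPlt', hsQlt']
    · -- general case
      rw [if_neg hL0] at hAsum
      rw [if_neg (by omega : ¬ (n - 1 - L = 0))] at hBsum
      have cA1 : f (P (i2 + 1 + ((n - L : ℕ) : ℤ) - 1)) (Q (j1 + 1) + 2 * Real.pi) =
          f (P i1) (Q (j1 + 1)) := by
        rw [show i2 + 1 + ((n - L : ℕ) : ℤ) - 1 = i1 + ((n : ℤ) + 1) by omega, hPper' i1]
        exact hper _ _
      have cA2 : ∑ s ∈ range (L - 1),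
          f (Q (j1 + 1 + (s : ℤ)) + 2 * Real.pi) (Q (j1 + 1 + (s : ℤ) + 1) + 2 * Real.pi) =
          ∑ s ∈ range (L - 1), f (Q (j1 + 1 + (s : ℤ))) (Q (j1 + 1 + (s : ℤ) + 1)) :=
        Finset.sum_congr rfl (fun s _ => hper _ _)
      have cA3 : f (Q (j1 + 1 + (L : ℤ) - 1) + 2 * Real.pi) (P (i2 + 1) + 2 * Real.pi) =
          f (Q j2) (P (i2 + 1)) := by
        rw [show j1 + 1 + (L : ℤ) - 1 = j2 by omega]
        exact hper _ _
      rw [cA1, cA2, cA3] at hAsum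
      have cB1 : f (P (i1 + 1 + ((L + 1 : ℕ) : ℤ) - 1)) (Q (j2 + 1)) =
          f (P i2) (Q (j2 + 1)) := by
        rw [show i1 + 1 + ((L + 1 : ℕ) : ℤ) - 1 = i2 by omega]
      have cB3 : f (Q (j2 + 1 + ((n - 1 - L : ℕ) : ℤ) - 1)) (P (i1 + 1) + 2 * Real.pi) =
          f (Q j1) (P (i1 + 1)) := by
        rw [show j2 + 1 + ((n - 1 - L : ℕ) : ℤ) - 1 = j1 + ((n : ℤ) - 1) by omega, hQper' j1]
        exact hper _ _
      rw [cB1, cB3] at hBsum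
      rw [show n - 1 - L - 1 = n - L - 2 by omega] at hBsum
      have EQ : sQ = (∑ s ∈ range (L - 1),
            f (Q (j1 + 1 + (s : ℤ))) (Q (j1 + 1 + (s : ℤ) + 1)))
          + f (Q j2) (Q (j2 + 1))
          + (∑ s ∈ range (n - L - 2),
            f (Q (j2 + 1 + (s : ℤ))) (Q (j2 + 1 + (s : ℤ) + 1)))
          + f (Q j1) (Q (j1 + 1)) := by
        rw [← hshQ (j1 + 1), show n - 1 = (n - 2) + 1 by omega,
          splitSum4 (fun t => f (Q (j1 + 1 + (t : ℤ))) (Q (j1 + 1 + (t : ℤ) + 1))) (L - 1)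
            (n - 2) (by omega)]
        have eQm : f (Q (j1 + 1 + ((L - 1 : ℕ) : ℤ))) (Q (j1 + 1 + ((L - 1 : ℕ) : ℤ) + 1)) =
            f (Q j2) (Q (j2 + 1)) := by
          rw [show j1 + 1 + ((L - 1 : ℕ) : ℤ) = j2 by omega]
        have eQlast : f (Q (j1 + 1 + ((n - 2 : ℕ) : ℤ))) (Q (j1 + 1 + ((n - 2 : ℕ) : ℤ) + 1)) =
            f (Q j1) (Q (j1 + 1)) := by
          rw [show j1 + 1 + ((n - 2 : ℕ) : ℤ) = j1 + ((n : ℤ) - 1) by omega,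
            show j1 + ((n : ℤ) - 1) + 1 = (j1 + 1) + ((n : ℤ) - 1) by ring, hQper' j1,
            hQper' (j1 + 1)]
          exact hper _ _
        have eQmid : ∑ s ∈ range (n - 2 - (L - 1) - 1),
            f (Q (j1 + 1 + ((L - 1 + 1 + s : ℕ) : ℤ)))
              (Q (j1 + 1 + ((L - 1 + 1 + s : ℕ) : ℤ) + 1)) =
            ∑ s ∈ range (n - L - 2),
              f (Q (j2 + 1 + (s : ℤ))) (Q (j2 + 1 + (s : ℤ) + 1)) := by
          rw [show n - 2 - (L - 1) - 1 = n - L - 2 by omega]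
          apply Finset.sum_congr rfl
          intro s _
          rw [show j1 + 1 + ((L - 1 + 1 + s : ℕ) : ℤ) = j2 + 1 + (s : ℤ) by omega]
        rw [eQm, eQlast, eQmid]
      have I1 := hineq (Q j1) (P i1) (P (i1 + 1)) (Q (j1 + 1)) s1a (hPm (by omega))
        s1b.le dQ1
      have I2 := hineq (Q j2) (P i2) (P (i2 + 1)) (Q (j2 + 1)) s2a (hPm (by omega))
        s2b.le dQ2
      linarith [hmA, hmB, hAsum, hBsum, EP, EQ, I1, I2, hsPlt', hsQlt']
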